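/- There exists a constant C > 0 such that for every measurable ψ : ℝ³ → ℝ one has sup_{k₁ ∈ ℝ³} ∫_{ℝ³×𝕊²} |ψ(k₂*)| b( ((k₁−k₂)/|k₁−k₂|) · σ ) dk₂ dσ ≤ C ‖ψ‖_{L¹(ℝ³)} and sup_{k₂ ∈ ℝ³} ∫_{ℝ³×𝕊²} |ψ(k₁*)| b( ((k₁−k₂)/|k₁−k₂|) · σ ) dk₁ dσ ≤ C ‖ψ‖_{L¹(ℝ³)}. -/

import Mathlib

open MeasureTheory Real
open scoped InnerProductSpace ENNReal

noncomputable section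

/-- Three dimensional Euclidean space. -/
abbrev R3 : Type := EuclideanSpace ℝ (Fin 3)

/-- The standard surface measure on the unit sphere 𝕊² ⊂ ℝ³. -/
def sphMeas : Measure (Metric.sphere (0 : R3) 1) := (volume : Measure R3).toSphere

/-- k₁* = (k₁+k₂)/2 + (|k₁−k₂|/2) σ. -/
def kst1 (k₁ k₂ : R3) (σ : Metric.sphere (0 : R3) 1) : R3 :=
  (2:ℝ)⁻¹ • (k₁ + k₂) + (‖k₁ - k₂‖ / 2) • (σ : R3)

/-- k₂* = (k₁+k₂)/2 − (|k₁−k₂|/2) σ. -/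
def kst2 (k₁ k₂ : R3) (σ : Metric.sphere (0 : R3) 1) : R3 :=
  (2:ℝ)⁻¹ • (k₁ + k₂) - (‖k₁ - k₂‖ / 2) • (σ : R3)

/-- b = 𝟙_{(0,∞)}, the indicator function of the positive reals. -/
def bInd : ℝ → ℝ := Set.indicator (Set.Ioi (0:ℝ)) (fun _ => (1:ℝ))

lemma hasFDerivAt_norm' (v : R3) (hv : v ≠ 0) :
    HasFDerivAt (fun x : R3 => ‖x‖) (innerSL ℝ (‖v‖⁻¹ • v)) v := by
  have h2 : HasFDerivAt (fun x : R3 => ‖x‖ ^ 2) (2 • (innerSL ℝ v)) v := by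
    simpa using (hasFDerivAt_id v).norm_sq
  have h3 := h2.sqrt (by simpa using hv)
  have he : (fun x : R3 => Real.sqrt (‖x‖ ^ 2)) = fun x : R3 => ‖x‖ := by
    ext x; exact Real.sqrt_sq (norm_nonneg x)
  rw [he] at h3
  convert h3 using 1
  have hnv : ‖v‖ ≠ 0 := norm_ne_zero_iff.mpr hv
  ext h
  simp [Real.sqrt_sq (norm_nonneg v), real_inner_smul_left, one_div]
  field_simp
  refine ContinuousLinearMap.ext fun h => ?_
  simp only [ContinuousLinearMap.smul_apply, innerSL_apply_apply, real_inner_smul_left,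
    Real.sqrt_sq (norm_nonneg v), smul_eq_mul, nsmul_eq_mul, Nat.cast_ofNat]
  field_simp

lemma det_aux (w σv : R3) :
    ((2:ℝ)⁻¹ • ContinuousLinearMap.id ℝ R3
      + (innerSL ℝ w).smulRight ((2:ℝ)⁻¹ • σv)).det
      = 8⁻¹ * (1 + ⟪w, σv⟫_ℝ) := by
  set L := ((2:ℝ)⁻¹ • ContinuousLinearMap.id ℝ R3
      + (innerSL ℝ w).smulRight ((2:ℝ)⁻¹ • σv))
  have hd : L.det = LinearMap.det (L : R3 →ₗ[ℝ] R3) := rfl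
  rw [hd, ← LinearMap.det_toMatrix (EuclideanSpace.basisFun (Fin 3) ℝ).toBasis]
  have hM : LinearMap.toMatrix (EuclideanSpace.basisFun (Fin 3) ℝ).toBasis
      (EuclideanSpace.basisFun (Fin 3) ℝ).toBasis (L : R3 →ₗ[ℝ] R3)
      = Matrix.of (fun i j => 2⁻¹ * (if i = j then (1:ℝ) else 0) + w j * (2⁻¹ * σv i)) := by
    ext i j
    rw [LinearMap.toMatrix_apply]
    simp only [L, OrthonormalBasis.coe_toBasis, OrthonormalBasis.coe_toBasis_repr_apply,
      EuclideanSpace.basisFun_repr, EuclideanSpace.basisFun_apply,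
      ContinuousLinearMap.coe_coe, ContinuousLinearMap.add_apply,
      ContinuousLinearMap.smul_apply, ContinuousLinearMap.id_apply,
      ContinuousLinearMap.smulRight_apply, innerSL_apply_apply, PiLp.add_apply,
      PiLp.smul_apply, smul_eq_mul, EuclideanSpace.single_apply,
      EuclideanSpace.inner_single_right, Matrix.of_apply, RCLike.inner_apply, conj_trivial,
      one_mul]
  rw [hM, Matrix.det_fin_three]
  simp only [Matrix.of_apply, PiLp.inner_apply, RCLike.inner_apply, conj_trivial,
    Fin.sum_univ_three]
  norm_num [Fin.ext_iff]
  ring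

lemma inj_aux (c : R3) (σv : R3) (hσ : ‖σv‖ = 1) :
    Set.InjOn (fun v : R3 => c + (2:ℝ)⁻¹ • v + ‖v‖ • ((2:ℝ)⁻¹ • σv))
      {v : R3 | 0 < ⟪v, σv⟫_ℝ} := by
  intro a ha b hb hab
  simp only [Set.mem_setOf_eq] at ha hb hab
  have key : a = b + (‖b‖ - ‖a‖) • σv := by
    linear_combination (norm := module) (2:ℝ) • hab
  set t : ℝ := ‖b‖ - ‖a‖ with ht
  have hna : ‖a‖ = ‖b‖ - t := by rw [ht]; ring
  have hsq : ‖a‖ ^ 2 = ‖b‖ ^ 2 + 2 * (t * ⟪b, σv⟫_ℝ) + t ^ 2 := by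
    rw [key, @norm_add_sq_real, real_inner_smul_right, norm_smul, hσ]
    simp [mul_pow, sq_abs]
  have hsq2 : (‖b‖ - t) ^ 2 = ‖b‖ ^ 2 - 2 * ‖b‖ * t + t ^ 2 := by ring
  have ht0 : t = 0 := by
    have hbn : 0 ≤ ‖b‖ := norm_nonneg b
    nlinarith [hsq, hna, hsq2]
  rw [key, ht0]; simp

lemma core (ψ : R3 → ℝ) (c σv : R3) (hσ : ‖σv‖ = 1) :
    (∫⁻ v : R3, ENNReal.ofReal
        (|ψ (c + (2:ℝ)⁻¹ • v + ‖v‖ • ((2:ℝ)⁻¹ • σv))| * bInd ⟪‖v‖⁻¹ • v, σv⟫_ℝ))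
      ≤ 8 * ∫⁻ x : R3, ENNReal.ofReal |ψ x| := by
  set f : R3 → R3 := fun v => c + (2:ℝ)⁻¹ • v + ‖v‖ • ((2:ℝ)⁻¹ • σv) with hf
  set s : Set R3 := {v : R3 | 0 < ⟪v, σv⟫_ℝ} with hs
  have hsm : MeasurableSet s := by
    have hc : Continuous fun v : R3 => ⟪v, σv⟫_ℝ := Continuous.inner continuous_id continuous_const
    exact (isOpen_lt continuous_const hc).measurableSet
  have h1 : (∫⁻ v : R3, ENNReal.ofReal
        (|ψ (f v)| * bInd ⟪‖v‖⁻¹ • v, σv⟫_ℝ))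
      = ∫⁻ v : R3 in s, ENNReal.ofReal |ψ (f v)| := by
    rw [← lintegral_indicator hsm]
    congr 1; ext v
    by_cases hv : v ∈ s
    · have hvpos : (0:ℝ) < ⟪v, σv⟫_ℝ := hv
      have hvne : v ≠ 0 := by
        rintro rfl; simp at hvpos
      have hip : 0 < ⟪‖v‖⁻¹ • v, σv⟫_ℝ := by
        rw [real_inner_smul_left]
        have h0 : 0 < ‖v‖⁻¹ := inv_pos.mpr (norm_pos_iff.mpr hvne)
        exact mul_pos h0 hvpos
      rw [Set.indicator_of_mem hv]
      have : bInd ⟪‖v‖⁻¹ • v, σv⟫_ℝ = 1 := Set.indicator_of_mem hip _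
      rw [this, mul_one]
    · have hle : ⟪v, σv⟫_ℝ ≤ 0 := le_of_not_gt hv
      have hip : ⟪‖v‖⁻¹ • v, σv⟫_ℝ ≤ 0 := by
        rw [real_inner_smul_left]
        exact mul_nonpos_of_nonneg_of_nonpos (by positivity) hle
      rw [Set.indicator_of_notMem hv]
      have : bInd ⟪‖v‖⁻¹ • v, σv⟫_ℝ = 0 := Set.indicator_of_notMem (by simpa using hip) _
      rw [this, mul_zero, ENNReal.ofReal_zero]
  rw [h1]
  set F' : R3 → (R3 →L[ℝ] R3) := fun v =>
    (2:ℝ)⁻¹ • ContinuousLinearMap.id ℝ R3 + (innerSL ℝ (‖v‖⁻¹ • v)).smulRight ((2:ℝ)⁻¹ • σv)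
    with hF'
  have hder : ∀ v ∈ s, HasFDerivWithinAt f (F' v) s v := by
    intro v hv
    have hvne : v ≠ 0 := by rintro rfl; simp [hs] at hv
    have hA : HasFDerivAt (fun v : R3 => ‖v‖ • ((2:ℝ)⁻¹ • σv))
        ((innerSL ℝ (‖v‖⁻¹ • v)).smulRight ((2:ℝ)⁻¹ • σv)) v :=
      (hasFDerivAt_norm' v hvne).smul_const _
    have hB : HasFDerivAt (fun v : R3 => c + (2:ℝ)⁻¹ • v)
        ((2:ℝ)⁻¹ • ContinuousLinearMap.id ℝ R3) v := by
      simpa using ((hasFDerivAt_id v).const_smul (2:ℝ)⁻¹).const_add c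
    exact (hB.add hA).hasFDerivWithinAt
  have hchg := lintegral_image_eq_lintegral_abs_det_fderiv_mul volume hsm hder
    (inj_aux c σv hσ) (fun x => ENNReal.ofReal |ψ x|)
  have hdetlb : ∀ v ∈ s, (8⁻¹ : ℝ≥0∞) ≤ ENNReal.ofReal |(F' v).det| := by
    intro v hv
    have hvpos : (0:ℝ) < ⟪v, σv⟫_ℝ := hv
    have hip : 0 ≤ ⟪‖v‖⁻¹ • v, σv⟫_ℝ := by
      rw [real_inner_smul_left]; positivity
    rw [hF']
    rw [det_aux]
    rw [abs_of_nonneg (by positivity)]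
    rw [show (8⁻¹:ℝ≥0∞) = ENNReal.ofReal 8⁻¹ by
      rw [ENNReal.ofReal_inv_of_pos (by norm_num : (0:ℝ) < 8)]; norm_num]
    apply ENNReal.ofReal_le_ofReal
    nlinarith
  calc (∫⁻ v : R3 in s, ENNReal.ofReal |ψ (f v)|)
      ≤ ∫⁻ v : R3 in s, 8 * (ENNReal.ofReal |(F' v).det| * ENNReal.ofReal |ψ (f v)|) := by
        apply lintegral_mono_ae
        filter_upwards [ae_restrict_mem hsm] with v hv
        calc ENNReal.ofReal |ψ (f v)| = 8 * (8⁻¹ * ENNReal.ofReal |ψ (f v)|) := by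
              rw [← mul_assoc, ENNReal.mul_inv_cancel (by norm_num) (by norm_num), one_mul]
          _ ≤ 8 * (ENNReal.ofReal |(F' v).det| * ENNReal.ofReal |ψ (f v)|) := by
              gcongr
              exact hdetlb v hv
    _ = 8 * ∫⁻ v : R3 in s, ENNReal.ofReal |(F' v).det| * ENNReal.ofReal |ψ (f v)| :=
        lintegral_const_mul' _ _ (by norm_num)
    _ = 8 * ∫⁻ x : R3 in f '' s, ENNReal.ofReal |ψ x| := by rw [hchg]
    _ ≤ 8 * ∫⁻ x : R3, ENNReal.ofReal |ψ x| := by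
        gcongr
        exact Measure.restrict_le_self

instance : IsFiniteMeasure sphMeas := by
  unfold sphMeas; infer_instance

theorem L1_averaging :
    ∃ C : ℝ, 0 < C ∧ ∀ ψ : R3 → ℝ, Measurable ψ →
      (∀ k₁ : R3,
        (∫⁻ k₂ : R3, ∫⁻ σ, ENNReal.ofReal
            (|ψ (kst2 k₁ k₂ σ)| * bInd ⟪‖k₁ - k₂‖⁻¹ • (k₁ - k₂), (σ : R3)⟫_ℝ) ∂sphMeas)
          ≤ ENNReal.ofReal C * ∫⁻ x : R3, ENNReal.ofReal |ψ x|) ∧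
      (∀ k₂ : R3,
        (∫⁻ k₁ : R3, ∫⁻ σ, ENNReal.ofReal
            (|ψ (kst1 k₁ k₂ σ)| * bInd ⟪‖k₁ - k₂‖⁻¹ • (k₁ - k₂), (σ : R3)⟫_ℝ) ∂sphMeas)
          ≤ ENNReal.ofReal C * ∫⁻ x : R3, ENNReal.ofReal |ψ x|) := by
  refine ⟨8 * (sphMeas Set.univ).toReal + 1, by positivity, fun ψ hψ => ?_⟩
  have hfin : sphMeas Set.univ ≠ ⊤ := measure_ne_top _ _
  have hC : sphMeas Set.univ * 8 ≤ ENNReal.ofReal (8 * (sphMeas Set.univ).toReal + 1) := by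
    conv_lhs => rw [← ENNReal.ofReal_toReal hfin,
      show (8:ℝ≥0∞) = ENNReal.ofReal 8 by norm_num,
      ← ENNReal.ofReal_mul ENNReal.toReal_nonneg]
    apply ENNReal.ofReal_le_ofReal
    linarith
  have hb : Measurable bInd := Measurable.indicator measurable_const measurableSet_Ioi
  constructor
  · intro k₁
    -- measurability for Fubini
    have hmeas : AEMeasurable (Function.uncurry fun (k₂ : R3) (σ : Metric.sphere (0:R3) 1) =>
        ENNReal.ofReal (|ψ (kst2 k₁ k₂ σ)| * bInd ⟪‖k₁ - k₂‖⁻¹ • (k₁ - k₂), (σ : R3)⟫_ℝ))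
        (volume.prod sphMeas) := by
      apply Measurable.aemeasurable
      apply Measurable.ennreal_ofReal
      apply Measurable.mul
      · apply Measurable.abs
        apply hψ.comp
        have : Continuous fun p : R3 × Metric.sphere (0:R3) 1 => kst2 k₁ p.1 p.2 := by
          unfold kst2
          fun_prop
        exact this.measurable
      · apply hb.comp
        apply Measurable.inner
        · exact (((continuous_const.sub continuous_fst).norm).measurable.inv).smul
            (continuous_const.sub continuous_fst).measurable
        · exact (continuous_subtype_val.comp continuous_snd).measurable
    rw [lintegral_lintegral_swap hmeas]
    calc (∫⁻ σ, ∫⁻ k₂ : R3, ENNReal.ofReal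
            (|ψ (kst2 k₁ k₂ σ)| * bInd ⟪‖k₁ - k₂‖⁻¹ • (k₁ - k₂), (σ : R3)⟫_ℝ) ∂volume ∂sphMeas)
        ≤ ∫⁻ _σ : Metric.sphere (0:R3) 1, (8 * ∫⁻ x : R3, ENNReal.ofReal |ψ x|) ∂sphMeas := by
          apply lintegral_mono
          intro σ
          dsimp only
          have hσ1 : ‖(-(σ:R3))‖ = 1 := by
            rw [norm_neg]; exact mem_sphere_zero_iff_norm.mp σ.2
          rw [← lintegral_add_left_eq_self (fun k₂ : R3 => ENNReal.ofReal
            (|ψ (kst2 k₁ k₂ σ)| * bInd ⟪‖k₁ - k₂‖⁻¹ • (k₁ - k₂), (σ : R3)⟫_ℝ)) k₁]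
          have heq : (fun v : R3 => ENNReal.ofReal
              (|ψ (kst2 k₁ (k₁ + v) σ)| * bInd ⟪‖k₁ - (k₁ + v)‖⁻¹ • (k₁ - (k₁ + v)), (σ : R3)⟫_ℝ))
              = fun v : R3 => ENNReal.ofReal
              (|ψ (k₁ + (2:ℝ)⁻¹ • v + ‖v‖ • ((2:ℝ)⁻¹ • (-(σ:R3))))| * bInd ⟪‖v‖⁻¹ • v, -(σ:R3)⟫_ℝ) := by
            funext v
            have h1 : k₁ - (k₁ + v) = -v := by abel
            have h2 : kst2 k₁ (k₁ + v) σ = k₁ + (2:ℝ)⁻¹ • v + ‖v‖ • ((2:ℝ)⁻¹ • (-(σ:R3))) := by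
              unfold kst2
              rw [h1, norm_neg]
              module
            have h3 : ⟪‖k₁ - (k₁ + v)‖⁻¹ • (k₁ - (k₁ + v)), (σ : R3)⟫_ℝ
                = ⟪‖v‖⁻¹ • v, -(σ:R3)⟫_ℝ := by
              rw [h1, norm_neg, smul_neg, inner_neg_left, inner_neg_right]
            rw [h2, h3]
          rw [heq]
          exact core ψ k₁ (-(σ:R3)) hσ1
      _ = sphMeas Set.univ * (8 * ∫⁻ x : R3, ENNReal.ofReal |ψ x|) := by
          rw [lintegral_const, mul_comm]
      _ ≤ ENNReal.ofReal (8 * (sphMeas Set.univ).toReal + 1) * ∫⁻ x : R3, ENNReal.ofReal |ψ x| := by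
          rw [← mul_assoc]
          exact mul_le_mul_left (by rw [mul_comm] at hC ⊢; exact hC) _
  · intro k₂
    have hmeas : AEMeasurable (Function.uncurry fun (k₁ : R3) (σ : Metric.sphere (0:R3) 1) =>
        ENNReal.ofReal (|ψ (kst1 k₁ k₂ σ)| * bInd ⟪‖k₁ - k₂‖⁻¹ • (k₁ - k₂), (σ : R3)⟫_ℝ))
        (volume.prod sphMeas) := by
      apply Measurable.aemeasurable
      apply Measurable.ennreal_ofReal
      apply Measurable.mul
      · apply Measurable.abs
        apply hψ.comp
        have : Continuous fun p : R3 × Metric.sphere (0:R3) 1 => kst1 p.1 k₂ p.2 := by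
          unfold kst1
          fun_prop
        exact this.measurable
      · apply hb.comp
        apply Measurable.inner
        · exact (((continuous_fst.sub continuous_const).norm).measurable.inv).smul
            (continuous_fst.sub continuous_const).measurable
        · exact (continuous_subtype_val.comp continuous_snd).measurable
    rw [lintegral_lintegral_swap hmeas]
    calc (∫⁻ σ, ∫⁻ k₁ : R3, ENNReal.ofReal
            (|ψ (kst1 k₁ k₂ σ)| * bInd ⟪‖k₁ - k₂‖⁻¹ • (k₁ - k₂), (σ : R3)⟫_ℝ) ∂volume ∂sphMeas)
        ≤ ∫⁻ _σ : Metric.sphere (0:R3) 1, (8 * ∫⁻ x : R3, ENNReal.ofReal |ψ x|) ∂sphMeas := by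
          apply lintegral_mono
          intro σ
          dsimp only
          have hσ1 : ‖(σ:R3)‖ = 1 := mem_sphere_zero_iff_norm.mp σ.2
          rw [← lintegral_add_left_eq_self (fun k₁ : R3 => ENNReal.ofReal
            (|ψ (kst1 k₁ k₂ σ)| * bInd ⟪‖k₁ - k₂‖⁻¹ • (k₁ - k₂), (σ : R3)⟫_ℝ)) k₂]
          have heq : (fun v : R3 => ENNReal.ofReal
              (|ψ (kst1 (k₂ + v) k₂ σ)| * bInd ⟪‖k₂ + v - k₂‖⁻¹ • (k₂ + v - k₂), (σ : R3)⟫_ℝ))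
              = fun v : R3 => ENNReal.ofReal
              (|ψ (k₂ + (2:ℝ)⁻¹ • v + ‖v‖ • ((2:ℝ)⁻¹ • (σ:R3)))| * bInd ⟪‖v‖⁻¹ • v, (σ:R3)⟫_ℝ) := by
            funext v
            have h1 : k₂ + v - k₂ = v := by abel
            have h2 : kst1 (k₂ + v) k₂ σ = k₂ + (2:ℝ)⁻¹ • v + ‖v‖ • ((2:ℝ)⁻¹ • (σ:R3)) := by
              unfold kst1
              rw [h1]
              module
            rw [h2, h1]
          rw [heq]
          exact core ψ k₂ ((σ:R3)) hσ1
      _ = sphMeas Set.univ * (8 * ∫⁻ x : R3, ENNReal.ofReal |ψ x|) := by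
          rw [lintegral_const, mul_comm]
      _ ≤ ENNReal.ofReal (8 * (sphMeas Set.univ).toReal + 1) * ∫⁻ x : R3, ENNReal.ofReal |ψ x| := by
          rw [← mul_assoc]
          exact mul_le_mul_left (by rw [mul_comm] at hC ⊢; exact hC) _
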